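/- Suppose ‖A‖ ≤ 1 (operator norm), ‖b‖ = 1, T ≥ 1, 0 ≤ η, η·T < 1/12, and the initial point is chosen as x₀ = (1 − 3·η·T) • b. Then the success probability p := (1/16^T) · (∏ t in Finset.range (T+1), ⟪b, x t⟫)² · ‖x T‖² satisfies p ≥ (1/16^T) · (1/4) · (1/2)^(2T) · (1/4). -/
import Mathlib

open scoped RealInnerProductSpace

set_option maxHeartbeats 1000000

theorem success_probability_explicit_lower_bound (n : ℕ)
    (A : EuclideanSpace ℝ (Fin n) →L[ℝ] EuclideanSpace ℝ (Fin n))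
    (b : EuclideanSpace ℝ (Fin n)) (hb : ‖b‖ = 1)
    (f : EuclideanSpace ℝ (Fin n) → ℝ)
    (hf : ∀ x, f x = (1/2) * ‖x‖^2 + (1/2) * ‖A x - b‖^2)
    (hA : ‖A‖ ≤ 1)
    (η : ℝ) (hη : 0 ≤ η) (T : ℕ) (hT : 1 ≤ T) (hηT : η * T < 1 / 12)
    (x₀ : EuclideanSpace ℝ (Fin n)) (hx₀ : x₀ = (1 - 3 * η * T) • b)
    (x : ℕ → EuclideanSpace ℝ (Fin n))
    (hx0 : x 0 = x₀)
    (hx : ∀ t, x (t + 1) = x t - η • (x t + (ContinuousLinearMap.adjoint A) (A (x t) - b))) :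
    (1 / 16 ^ T) * (∏ t ∈ Finset.range (T + 1), ⟪b, x t⟫) ^ 2 * ‖x T‖ ^ 2 ≥
      (1 / 16 ^ T) * (1 / 4) * (1 / 2) ^ (2 * T) * (1 / 4) := by
  have hT1 : (1:ℝ) ≤ (T:ℝ) := by exact_mod_cast hT
  have hη1 : η ≤ 1 := by nlinarith
  have hAadj : ‖ContinuousLinearMap.adjoint A‖ ≤ 1 := by
    rw [show ‖ContinuousLinearMap.adjoint A‖ = ‖A‖ from
      (ContinuousLinearMap.adjoint (𝕜 := ℝ)).norm_map A]
    exact hA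
  -- norm bound
  have hnorm : ∀ t, ‖x t‖ ≤ 1 - 3*η*T + η*t := by
    intro t
    induction t with
    | zero =>
      rw [hx0, hx₀, norm_smul, hb]
      simp only [Real.norm_eq_abs, Nat.cast_zero]
      rw [abs_of_nonneg (by nlinarith)]
      nlinarith
    | succ t ih =>
      have h1 : x (t+1) = (1 - η) • x t - η • (ContinuousLinearMap.adjoint A) (A (x t) - b) := by
        rw [hx t]; module
      have h2 : ‖(ContinuousLinearMap.adjoint A) (A (x t) - b)‖ ≤ ‖x t‖ + 1 := by
        calc ‖(ContinuousLinearMap.adjoint A) (A (x t) - b)‖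
            ≤ ‖ContinuousLinearMap.adjoint A‖ * ‖A (x t) - b‖ :=
              (ContinuousLinearMap.adjoint A).le_opNorm _
          _ ≤ 1 * (‖A (x t)‖ + ‖b‖) := by
              apply mul_le_mul hAadj (norm_sub_le _ _) (norm_nonneg _) zero_le_one
          _ ≤ ‖x t‖ + 1 := by
              have := A.le_opNorm (x t)
              have h3 : ‖A (x t)‖ ≤ ‖x t‖ := by nlinarith [norm_nonneg (x t)]
              rw [hb]; linarith
      have h4 : ‖x (t+1)‖ ≤ (1 - η) * ‖x t‖ + η * (‖x t‖ + 1) := by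
        rw [h1]
        calc ‖(1 - η) • x t - η • (ContinuousLinearMap.adjoint A) (A (x t) - b)‖
            ≤ ‖(1 - η) • x t‖ + ‖η • (ContinuousLinearMap.adjoint A) (A (x t) - b)‖ :=
              norm_sub_le _ _
          _ ≤ (1 - η) * ‖x t‖ + η * (‖x t‖ + 1) := by
              rw [norm_smul, norm_smul, Real.norm_eq_abs, Real.norm_eq_abs,
                abs_of_nonneg (by linarith : (0:ℝ) ≤ 1 - η), abs_of_nonneg hη]
              nlinarith [h2]
      push_cast
      nlinarith
  -- inner product bound
  have hc : ∀ t, t ≤ T → 1 - 3*η*T - 3*η*t ≤ ⟪b, x t⟫ := by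
    intro t
    induction t with
    | zero =>
      intro _
      rw [hx0, hx₀, real_inner_smul_right, real_inner_self_eq_norm_sq, hb]
      push_cast; nlinarith
    | succ t ih =>
      intro hst
      have ht : t ≤ T := Nat.le_of_succ_le hst
      have htT : (t:ℝ) ≤ (T:ℝ) := by exact_mod_cast ht
      have hxt1 : ‖x t‖ ≤ 1 := by
        have := hnorm t
        nlinarith
      have ih' := ih ht
      have hc1 : ⟪b, x t⟫ ≤ 1 := by
        have := real_inner_le_norm b (x t)
        rw [hb] at this; linarith
      have hc2 : ⟪b, (ContinuousLinearMap.adjoint A) (A (x t) - b)⟫ ≤ 2 := by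
        have h5 := real_inner_le_norm b ((ContinuousLinearMap.adjoint A) (A (x t) - b))
        have h2 : ‖(ContinuousLinearMap.adjoint A) (A (x t) - b)‖ ≤ ‖x t‖ + 1 := by
          calc ‖(ContinuousLinearMap.adjoint A) (A (x t) - b)‖
              ≤ ‖ContinuousLinearMap.adjoint A‖ * ‖A (x t) - b‖ :=
                (ContinuousLinearMap.adjoint A).le_opNorm _
            _ ≤ 1 * (‖A (x t)‖ + ‖b‖) := by
                apply mul_le_mul hAadj (norm_sub_le _ _) (norm_nonneg _) zero_le_one
            _ ≤ ‖x t‖ + 1 := by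
                have := A.le_opNorm (x t)
                have h3 : ‖A (x t)‖ ≤ ‖x t‖ := by nlinarith [norm_nonneg (x t)]
                rw [hb]; linarith
        rw [hb] at h5
        nlinarith
      have heq : ⟪b, x (t+1)⟫ =
          ⟪b, x t⟫ - η * (⟪b, x t⟫ + ⟪b, (ContinuousLinearMap.adjoint A) (A (x t) - b)⟫) := by
        rw [hx t, inner_sub_right, real_inner_smul_right, inner_add_right]
      rw [heq]
      push_cast
      nlinarith
  -- each inner product ≥ 1/2
  have hhalf : ∀ t ∈ Finset.range (T+1), (1/2 : ℝ) ≤ ⟪b, x t⟫ := by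
    intro t htmem
    have ht : t ≤ T := Nat.lt_succ_iff.mp (Finset.mem_range.mp htmem)
    have htT : (t:ℝ) ≤ (T:ℝ) := by exact_mod_cast ht
    have := hc t ht
    nlinarith
  have hP : (1/2 : ℝ) ^ (T+1) ≤ ∏ t ∈ Finset.range (T + 1), ⟪b, x t⟫ := by
    calc (1/2 : ℝ) ^ (T+1) = ∏ _t ∈ Finset.range (T+1), (1/2 : ℝ) := by
          rw [Finset.prod_const, Finset.card_range]
      _ ≤ ∏ t ∈ Finset.range (T + 1), ⟪b, x t⟫ :=
          Finset.prod_le_prod (fun i _ => by norm_num) hhalf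
  have hPpos : (0:ℝ) < (1/2 : ℝ) ^ (T+1) := by positivity
  have hP2 : (1/4) * (1/2 : ℝ) ^ (2*T) ≤ (∏ t ∈ Finset.range (T + 1), ⟪b, x t⟫) ^ 2 := by
    have h6 : ((1/2 : ℝ) ^ (T+1)) ^ 2 ≤ (∏ t ∈ Finset.range (T + 1), ⟪b, x t⟫) ^ 2 := by
      apply pow_le_pow_left₀ (le_of_lt hPpos) hP
    calc (1/4) * (1/2 : ℝ) ^ (2*T) = ((1/2 : ℝ) ^ (T+1)) ^ 2 := by
          rw [← pow_mul]; ring_nf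
      _ ≤ _ := h6
  have hxT : (1/2 : ℝ) ≤ ‖x T‖ := by
    have h7 := hc T le_rfl
    have h8 := real_inner_le_norm b (x T)
    rw [hb] at h8
    nlinarith
  have hxT2 : (1/4 : ℝ) ≤ ‖x T‖ ^ 2 := by nlinarith
  have hc16 : (0:ℝ) < 1 / 16 ^ T := by positivity
  have h1 : (1/4) * (1/2 : ℝ) ^ (2*T) * (1/4) ≤
      (∏ t ∈ Finset.range (T + 1), ⟪b, x t⟫) ^ 2 * ‖x T‖ ^ 2 :=
    mul_le_mul hP2 hxT2 (by norm_num) (sq_nonneg _)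
  have h2 := mul_le_mul_of_nonneg_left h1 (le_of_lt hc16)
  nlinarith [h2]
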